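/- The countable random poset (the unique countable homogeneous universal partial order) is not reversible: it admits a bijective order-homomorphism onto itself that is not an order-automorphism. -/

import Mathlib

/-- `p` and `q` are incomparable. -/
def Incomp {P : Type} [PartialOrder P] (p q : P) : Prop := ¬ p < q ∧ ¬ q < p

/-- A countable poset is the countable random poset (the Fraïssé limit of the
class of finite posets) iff it satisfies the one-point extension property:
for all finite `L, G, I` with `L < G` and no forbidden comparabilities with `I`,
there is a new point `x` with `L < x < G` and `x` incomparable to all of `I`. -/
def IsRandomPoset (P : Type) [PartialOrder P] : Prop :=
  Countable P ∧ Infinite P ∧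
    ∀ L G I : Finset P,
      (∀ a ∈ L, ∀ b ∈ G, a < b) →
      (∀ i ∈ I, ∀ a ∈ L, ¬ i ≤ a) →
      (∀ i ∈ I, ∀ b ∈ G, ¬ b ≤ i) →
      ∃ x : P, x ∉ L ∧ x ∉ G ∧ x ∉ I ∧
        (∀ a ∈ L, a < x) ∧ (∀ b ∈ G, x < b) ∧ ∀ i ∈ I, Incomp x i

namespace Stmt9

open Classical

variable {P : Type} [PartialOrder P]

/-- The one-point extension property alone. -/
def Ext (P : Type) [PartialOrder P] : Prop :=
  ∀ L G I : Finset P,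
      (∀ a ∈ L, ∀ b ∈ G, a < b) →
      (∀ i ∈ I, ∀ a ∈ L, ¬ i ≤ a) →
      (∀ i ∈ I, ∀ b ∈ G, ¬ b ≤ i) →
      ∃ x : P, x ∉ L ∧ x ∉ G ∧ x ∉ I ∧
        (∀ a ∈ L, a < x) ∧ (∀ b ∈ G, x < b) ∧ ∀ i ∈ I, Incomp x i

/-- A finite partial injective order-homomorphism, given as a list of pairs. -/
def Good (l : List (P × P)) : Prop :=
  l.Pairwise (fun x y => x.1 ≠ y.1 ∧ x.2 ≠ y.2) ∧
    ∀ x ∈ l, ∀ y ∈ l, x.1 < y.1 → x.2 < y.2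

omit [PartialOrder P] in
theorem symmR : Symmetric (fun x y : P × P => x.1 ≠ y.1 ∧ x.2 ≠ y.2) :=
  fun _ _ h => ⟨h.1.symm, h.2.symm⟩

theorem Good.fst_inj {l : List (P × P)} (h : Good l) {p q q' : P}
    (h1 : (p, q) ∈ l) (h2 : (p, q') ∈ l) : q = q' := by
  by_contra hne
  haveI : Std.Symm (fun x y : P × P => x.1 ≠ y.1 ∧ x.2 ≠ y.2) := ⟨fun _ _ h => symmR h⟩
  exact (h.1.forall h1 h2 (fun hc => hne (congrArg Prod.snd hc))).1 rfl

theorem Good.snd_inj {l : List (P × P)} (h : Good l) {p p' q : P}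
    (h1 : (p, q) ∈ l) (h2 : (p', q) ∈ l) : p = p' := by
  by_contra hne
  haveI : Std.Symm (fun x y : P × P => x.1 ≠ y.1 ∧ x.2 ≠ y.2) := ⟨fun _ _ h => symmR h⟩
  exact (h.1.forall h1 h2 (fun hc => hne (congrArg Prod.fst hc))).2 rfl

/-- Forth step: extend a good partial map so that `p` is in its domain. -/
theorem forth (hext : Ext P) {l : List (P × P)} (hl : Good l) (p : P) :
    ∃ l' : List (P × P), Good l' ∧ (∀ x ∈ l, x ∈ l') ∧ p ∈ l'.map Prod.fst := by
  classical
  by_cases hp : p ∈ l.map Prod.fst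
  · exact ⟨l, hl, fun x hx => hx, hp⟩
  have hpne : ∀ y ∈ l, y.1 ≠ p := fun y hy hEq => hp (List.mem_map.mpr ⟨y, hy, hEq⟩)
  set L : Finset P := ((l.filter fun y => decide (y.1 < p)).map Prod.snd).toFinset with hLdef
  set G : Finset P := ((l.filter fun y => decide (p < y.1)).map Prod.snd).toFinset with hGdef
  set I : Finset P := ((l.filter fun y => decide ((¬ y.1 < p ∧ ¬ p < y.1) ∧
      (∀ z ∈ l, z.1 < p → ¬ y.2 ≤ z.2) ∧
      (∀ z ∈ l, p < z.1 → ¬ z.2 ≤ y.2))).map Prod.snd).toFinset with hIdef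
  have hLmem : ∀ w, w ∈ L ↔ ∃ y, y ∈ l ∧ y.1 < p ∧ y.2 = w := by
    intro w
    simp only [hLdef, List.mem_toFinset, List.mem_map, List.mem_filter, decide_eq_true_iff]
    tauto
  have hGmem : ∀ w, w ∈ G ↔ ∃ y, y ∈ l ∧ p < y.1 ∧ y.2 = w := by
    intro w
    simp only [hGdef, List.mem_toFinset, List.mem_map, List.mem_filter, decide_eq_true_iff]
    tauto
  have hImem : ∀ w, w ∈ I ↔ ∃ y, y ∈ l ∧ ((¬ y.1 < p ∧ ¬ p < y.1) ∧
      (∀ z ∈ l, z.1 < p → ¬ y.2 ≤ z.2) ∧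
      (∀ z ∈ l, p < z.1 → ¬ z.2 ≤ y.2)) ∧ y.2 = w := by
    intro w
    simp only [hIdef, List.mem_toFinset, List.mem_map, List.mem_filter, decide_eq_true_iff]
    tauto
  have h1 : ∀ a ∈ L, ∀ b ∈ G, a < b := by
    intro a ha b hb
    obtain ⟨y, hyl, hy1, rfl⟩ := (hLmem a).1 ha
    obtain ⟨z, hzl, hz1, rfl⟩ := (hGmem b).1 hb
    exact hl.2 y hyl z hzl (hy1.trans hz1)
  have h2 : ∀ i ∈ I, ∀ a ∈ L, ¬ i ≤ a := by
    intro i hi a ha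
    obtain ⟨y, hyl, ⟨-, hy2, -⟩, rfl⟩ := (hImem i).1 hi
    obtain ⟨z, hzl, hz1, rfl⟩ := (hLmem a).1 ha
    exact hy2 z hzl hz1
  have h3 : ∀ i ∈ I, ∀ b ∈ G, ¬ b ≤ i := by
    intro i hi b hb
    obtain ⟨y, hyl, ⟨-, -, hy3⟩, rfl⟩ := (hImem i).1 hi
    obtain ⟨z, hzl, hz1, rfl⟩ := (hGmem b).1 hb
    exact hy3 z hzl hz1
  obtain ⟨x, hxL, hxG, hxI, hLx, hxGlt, hxinc⟩ := hext L G I h1 h2 h3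
  refine ⟨(p, x) :: l, ⟨List.pairwise_cons.mpr ⟨?_, hl.1⟩, ?_⟩,
    fun y hy => List.mem_cons_of_mem _ hy, by simp⟩
  · intro y hy
    show p ≠ y.1 ∧ x ≠ y.2
    refine ⟨fun h => hpne y hy h.symm, ?_⟩
    by_cases hc1 : y.1 < p
    · exact (hLx _ ((hLmem _).2 ⟨y, hy, hc1, rfl⟩)).ne'
    by_cases hc2 : p < y.1
    · exact (hxGlt _ ((hGmem _).2 ⟨y, hy, hc2, rfl⟩)).ne
    by_cases hc3 : (∀ z ∈ l, z.1 < p → ¬ y.2 ≤ z.2) ∧ (∀ z ∈ l, p < z.1 → ¬ z.2 ≤ y.2)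
    · intro hEq
      exact hxI (hEq ▸ (hImem _).2 ⟨y, hy, ⟨⟨hc1, hc2⟩, hc3.1, hc3.2⟩, rfl⟩)
    by_cases hA : ∀ z ∈ l, z.1 < p → ¬ y.2 ≤ z.2
    · have hB : ¬ ∀ z ∈ l, p < z.1 → ¬ z.2 ≤ y.2 := fun hB => hc3 ⟨hA, hB⟩
      push_neg at hB
      obtain ⟨z, hzl, hz1, hz2⟩ := hB
      exact ((hxGlt _ ((hGmem _).2 ⟨z, hzl, hz1, rfl⟩)).trans_le hz2).ne
    · push_neg at hA
      obtain ⟨z, hzl, hz1, hz2⟩ := hA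
      exact (hz2.trans_lt (hLx _ ((hLmem _).2 ⟨z, hzl, hz1, rfl⟩))).ne'
  · intro u hu v hv huv
    rcases List.mem_cons.mp hu with rfl | hu' <;> rcases List.mem_cons.mp hv with rfl | hv'
    · exact absurd huv (lt_irrefl _)
    · exact hxGlt _ ((hGmem _).2 ⟨v, hv', huv, rfl⟩)
    · exact hLx _ ((hLmem _).2 ⟨u, hu', huv, rfl⟩)
    · exact hl.2 u hu' v hv' huv

/-- Back step: extend a good partial map so that `q` is in its range. -/
theorem back (hext : Ext P) {l : List (P × P)} (hl : Good l) (q : P) :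
    ∃ l' : List (P × P), Good l' ∧ (∀ x ∈ l, x ∈ l') ∧ q ∈ l'.map Prod.snd := by
  classical
  by_cases hq : q ∈ l.map Prod.snd
  · exact ⟨l, hl, fun x hx => hx, hq⟩
  obtain ⟨x, -, -, hxI, -, -, hxinc⟩ := hext ∅ ∅ (l.map Prod.fst).toFinset
    (by simp) (by simp) (by simp)
  refine ⟨(x, q) :: l, ⟨List.pairwise_cons.mpr ⟨?_, hl.1⟩, ?_⟩,
    fun y hy => List.mem_cons_of_mem _ hy, by simp⟩
  · intro y hy
    show x ≠ y.1 ∧ q ≠ y.2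
    constructor
    · intro hEq
      exact hxI (hEq ▸ List.mem_toFinset.mpr (List.mem_map.mpr ⟨y, hy, rfl⟩))
    · intro hEq
      exact hq (List.mem_map.mpr ⟨y, hy, hEq.symm⟩)
  · intro u hu v hv huv
    rcases List.mem_cons.mp hu with rfl | hu' <;> rcases List.mem_cons.mp hv with rfl | hv'
    · exact absurd huv (lt_irrefl _)
    · exact absurd huv
        (hxinc v.1 (List.mem_toFinset.mpr (List.mem_map.mpr ⟨v, hv', rfl⟩))).1
    · exact absurd huv
        (hxinc u.1 (List.mem_toFinset.mpr (List.mem_map.mpr ⟨u, hu', rfl⟩))).2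
    · exact hl.2 u hu' v hv' huv

/-- The back-and-forth chain of good partial maps. -/
noncomputable def chain (hext : Ext P) (e : ℕ → P) (s : {l : List (P × P) // Good l}) :
    ℕ → {l : List (P × P) // Good l}
  | 0 => s
  | n + 1 =>
    if n % 2 = 0 then
      ⟨(forth hext (chain hext e s n).2 (e (n / 2))).choose,
        (forth hext (chain hext e s n).2 (e (n / 2))).choose_spec.1⟩
    else
      ⟨(back hext (chain hext e s n).2 (e (n / 2))).choose,
        (back hext (chain hext e s n).2 (e (n / 2))).choose_spec.1⟩

theorem chain_succ_subset (hext : Ext P) (e : ℕ → P) (s : {l : List (P × P) // Good l})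
    (n : ℕ) : ∀ x ∈ (chain hext e s n).1, x ∈ (chain hext e s (n + 1)).1 := by
  intro x hx
  rw [chain]
  by_cases h : n % 2 = 0
  · rw [if_pos h]
    exact (forth hext (chain hext e s n).2 (e (n / 2))).choose_spec.2.1 x hx
  · rw [if_neg h]
    exact (back hext (chain hext e s n).2 (e (n / 2))).choose_spec.2.1 x hx

theorem chain_subset (hext : Ext P) (e : ℕ → P) (s : {l : List (P × P) // Good l})
    {m n : ℕ} (h : m ≤ n) : ∀ x ∈ (chain hext e s m).1, x ∈ (chain hext e s n).1 := by
  induction h with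
  | refl => exact fun x hx => hx
  | step h ih => exact fun x hx => chain_succ_subset hext e s _ x (ih x hx)

theorem chain_fst_aux (hext : Ext P) (e : ℕ → P) (s : {l : List (P × P) // Good l})
    (n : ℕ) (h : n % 2 = 0) : e (n / 2) ∈ (chain hext e s (n + 1)).1.map Prod.fst := by
  rw [chain, if_pos h]
  exact (forth hext (chain hext e s n).2 (e (n / 2))).choose_spec.2.2

theorem chain_snd_aux (hext : Ext P) (e : ℕ → P) (s : {l : List (P × P) // Good l})
    (n : ℕ) (h : ¬ n % 2 = 0) : e (n / 2) ∈ (chain hext e s (n + 1)).1.map Prod.snd := by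
  rw [chain, if_neg h]
  exact (back hext (chain hext e s n).2 (e (n / 2))).choose_spec.2.2

theorem chain_fst (hext : Ext P) (e : ℕ → P) (s : {l : List (P × P) // Good l}) (m : ℕ) :
    e m ∈ (chain hext e s (2 * m + 1)).1.map Prod.fst := by
  have := chain_fst_aux hext e s (2 * m) (by omega)
  rwa [show (2 * m) / 2 = m by omega] at this

theorem chain_snd (hext : Ext P) (e : ℕ → P) (s : {l : List (P × P) // Good l}) (m : ℕ) :
    e m ∈ (chain hext e s (2 * m + 2)).1.map Prod.snd := by
  have := chain_snd_aux hext e s (2 * m + 1) (by omega)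
  rwa [show (2 * m + 1) / 2 = m by omega] at this

end Stmt9

theorem stmt_9 {P : Type} [PartialOrder P] (hP : IsRandomPoset P) :
    ∃ F : P → P, Function.Bijective F ∧ (∀ p q : P, p < q → F p < F q) ∧
      ¬ ∀ p q : P, F p < F q → p < q := by
  classical
  obtain ⟨hc, hinf, hext'⟩ := hP
  have hext : Stmt9.Ext P := hext'
  haveI : Countable P := hc
  haveI : Infinite P := hinf
  -- two incomparable points
  set p₁ : P := Classical.arbitrary P with hp₁
  obtain ⟨p₂, -, -, hp2ne, -, -, hinc⟩ := hext ∅ ∅ {p₁} (by simp) (by simp) (by simp)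
  have hincp : Incomp p₂ p₁ := hinc p₁ (Finset.mem_singleton_self p₁)
  have hne12 : p₁ ≠ p₂ := fun h => hp2ne (Finset.mem_singleton.mpr h.symm)
  -- a point strictly above p₁
  obtain ⟨q₂, -, -, -, hltq, -, -⟩ := hext {p₁} ∅ ∅ (by simp) (by simp) (by simp)
  have hlt : p₁ < q₂ := hltq p₁ (Finset.mem_singleton_self p₁)
  -- the seed: p₁ ↦ p₁, p₂ ↦ q₂, with p₁, p₂ incomparable but p₁ < q₂
  have hgood : Stmt9.Good [(p₁, p₁), (p₂, q₂)] := by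
    constructor
    · refine List.pairwise_cons.mpr ⟨?_, List.pairwise_singleton _ _⟩
      intro y hy
      rw [List.mem_singleton] at hy
      subst hy
      exact ⟨hne12, hlt.ne⟩
    · intro u hu v hv huv
      simp only [List.mem_cons, List.mem_singleton, List.not_mem_nil, or_false] at hu hv
      rcases hu with rfl | rfl <;> rcases hv with rfl | rfl
      · exact absurd huv (lt_irrefl _)
      · exact absurd huv hincp.2
      · exact absurd huv hincp.1
      · exact absurd huv (lt_irrefl _)
  set s : {l : List (P × P) // Stmt9.Good l} := ⟨[(p₁, p₁), (p₂, q₂)], hgood⟩ with hs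
  obtain ⟨e, he⟩ := exists_surjective_nat P
  set c : ℕ → {l : List (P × P) // Stmt9.Good l} := Stmt9.chain hext e s with hcdef
  -- coverage of the domain
  have hcov : ∀ p : P, ∃ q, ∃ n, (p, q) ∈ (c n).1 := by
    intro p
    obtain ⟨m, rfl⟩ := he p
    obtain ⟨y, hy, hy1⟩ := List.mem_map.mp (Stmt9.chain_fst hext e s m)
    refine ⟨y.2, 2 * m + 1, ?_⟩
    rw [← hy1]
    exact hy
  -- uniqueness
  have huniq : ∀ {p q q' : P} {n n' : ℕ},
      (p, q) ∈ (c n).1 → (p, q') ∈ (c n').1 → q = q' := by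
    intro p q q' n n' h h'
    have h1 : (p, q) ∈ (c (max n n')).1 :=
      Stmt9.chain_subset hext e s (le_max_left n n') _ h
    have h2 : (p, q') ∈ (c (max n n')).1 :=
      Stmt9.chain_subset hext e s (le_max_right n n') _ h'
    exact (c (max n n')).2.fst_inj h1 h2
  have huniq2 : ∀ {p p' q : P} {n n' : ℕ},
      (p, q) ∈ (c n).1 → (p', q) ∈ (c n').1 → p = p' := by
    intro p p' q n n' h h'
    have h1 : (p, q) ∈ (c (max n n')).1 :=
      Stmt9.chain_subset hext e s (le_max_left n n') _ h
    have h2 : (p', q) ∈ (c (max n n')).1 :=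
      Stmt9.chain_subset hext e s (le_max_right n n') _ h'
    exact (c (max n n')).2.snd_inj h1 h2
  set F : P → P := fun p => (hcov p).choose with hFdef
  have hF : ∀ p : P, ∃ n, (p, F p) ∈ (c n).1 := fun p => (hcov p).choose_spec
  have hFval : ∀ {p q : P} {n : ℕ}, (p, q) ∈ (c n).1 → F p = q := by
    intro p q n h
    obtain ⟨n', h'⟩ := hF p
    exact huniq h' h
  refine ⟨F, ⟨?_, ?_⟩, ?_, ?_⟩
  · -- injective
    intro p p' hpp
    obtain ⟨n, h⟩ := hF p
    obtain ⟨n', h'⟩ := hF p'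
    rw [hpp] at h
    exact huniq2 h h'
  · -- surjective
    intro q
    obtain ⟨m, rfl⟩ := he q
    obtain ⟨y, hy, hy2⟩ := List.mem_map.mp (Stmt9.chain_snd hext e s m)
    refine ⟨y.1, ?_⟩
    rw [← hy2]
    exact hFval (n := 2 * m + 2) (by exact hy)
  · -- monotone
    intro p q hpq
    obtain ⟨n, h⟩ := hF p
    obtain ⟨n', h'⟩ := hF q
    have h1 : (p, F p) ∈ (c (max n n')).1 :=
      Stmt9.chain_subset hext e s (le_max_left n n') _ h
    have h2 : (q, F q) ∈ (c (max n n')).1 :=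
      Stmt9.chain_subset hext e s (le_max_right n n') _ h'
    exact (c (max n n')).2.2 _ h1 _ h2 hpq
  · -- not order-reflecting
    intro hrefl
    have hm1 : (p₁, p₁) ∈ (c 0).1 := by
      show (p₁, p₁) ∈ [(p₁, p₁), (p₂, q₂)]
      exact List.mem_cons_self
    have hm2 : (p₂, q₂) ∈ (c 0).1 := by
      show (p₂, q₂) ∈ [(p₁, p₁), (p₂, q₂)]
      exact List.mem_cons_of_mem _ (List.mem_singleton.mpr rfl)
    have hF1 : F p₁ = p₁ := hFval hm1
    have hF2 : F p₂ = q₂ := hFval hm2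
    have : p₁ < p₂ := hrefl p₁ p₂ (by rw [hF1, hF2]; exact hlt)
    exact hincp.2 this
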